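/- arXiv:math/0111265 — 2 statements merged into one kernel-verified Lean document; each statement's English description precedes it below -/
import Mathlib

section
/- For a trace-free symmetric endomorphism W of a 3-dimensional real inner product space, the lowest eigenvalue w of W satisfies w ≥ -√(2/3)·‖W‖, where ‖W‖ is the Frobenius (Hilbert–Schmidt) norm of W. -/
/-- For a trace-free symmetric endomorphism `W` of a 3-dimensional real inner
product space, every eigenvalue (in particular the lowest one) satisfies
`w ≥ -√(2/3)·‖W‖`, where `‖W‖² = tr(W ∘ W)` is the Frobenius norm squared. -/
theorem stmt_0 {V : Type*} [NormedAddCommGroup V] [InnerProductSpace ℝ V]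
    [FiniteDimensional ℝ V] (hdim : Module.finrank ℝ V = 3)
    (W : V →ₗ[ℝ] V) (hsym : W.IsSymmetric)
    (htr : LinearMap.trace ℝ V W = 0)
    (w : ℝ) (hw : Module.End.HasEigenvalue W w)
    (hlow : ∀ μ : ℝ, Module.End.HasEigenvalue W μ → w ≤ μ) :
    w ≥ -Real.sqrt (2 / 3) * Real.sqrt (LinearMap.trace ℝ V (W ∘ₗ W)) := by
  classical
  set μ := hsym.eigenvalues hdim with hμ
  set b := hsym.eigenvectorBasis hdim with hb
  -- trace formulas
  have hdiag : ∀ (T : V →ₗ[ℝ] V), (∀ i, T (b i) = (μ i ^ 1) • b i) → True := fun _ _ => trivial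
  have htrace : ∀ (T : V →ₗ[ℝ] V) (f : Fin 3 → ℝ), (∀ i, T (b i) = f i • b i) →
      LinearMap.trace ℝ V T = ∑ i, f i := by
    intro T f hf
    rw [LinearMap.trace_eq_matrix_trace ℝ b.toBasis T, Matrix.trace]
    congr 1; funext i
    simp [Matrix.diag, LinearMap.toMatrix_apply, hf i, OrthonormalBasis.coe_toBasis,
      OrthonormalBasis.coe_toBasis_repr_apply, b.repr_self i]
  have h1 : (∑ i, μ i) = 0 := by
    rw [← htrace W μ (fun i => hsym.apply_eigenvectorBasis hdim i)]; exact htr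
  have h2 : LinearMap.trace ℝ V (W ∘ₗ W) = ∑ i, μ i ^ 2 := by
    apply htrace
    intro i
    simp [show W (b i) = μ i • b i from hsym.apply_eigenvectorBasis hdim i, smul_smul, pow_two]
  -- w is an eigenvalue hence equals some μ i
  obtain ⟨v, hv⟩ := hw.exists_hasEigenvector
  have hv0 : v ≠ 0 := hv.right
  have hv1 : W v = w • v := hv.apply_eq_smul
  have hrepr : ∀ i, w * b.repr v i = μ i * b.repr v i := by
    intro i
    have := hsym.eigenvectorBasis_apply_self_apply hdim v i
    rw [hv1, map_smul] at this
    simpa using this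
  have hex : ∃ i, w = μ i := by
    by_contra h
    push_neg at h
    apply hv0
    have : ∀ i, b.repr v i = 0 := by
      intro i
      have := hrepr i
      by_contra h0
      exact h i (mul_right_cancel₀ h0 this)
    have : b.repr v = 0 := by ext i; simpa using this i
    simpa using b.repr.injective (by simpa using this)
  obtain ⟨i0, hi0⟩ := hex
  have hle : ∀ i, w ≤ μ i := fun i => hlow _ (hsym.hasEigenvalue_eigenvalues hdim i)
  -- algebra
  set s := ∑ i, μ i ^ 2 with hs
  have hs0 : 0 ≤ s := Finset.sum_nonneg fun i _ => sq_nonneg _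
  have hkey : 3 * w ^ 2 ≤ 2 * s := by
    -- other two eigenvalues sum to -w
    rw [Fin.sum_univ_three] at h1 hs
    have h3 : w = μ 0 ∨ w = μ 1 ∨ w = μ 2 := by
      fin_cases i0
      · exact Or.inl hi0
      · exact Or.inr (Or.inl hi0)
      · exact Or.inr (Or.inr hi0)
    rw [hs]
    rcases h3 with h | h | h
    · have hsub : μ 0 = -(μ 1 + μ 2) := by linarith
      rw [h, hsub]; nlinarith [sq_nonneg (μ 1 - μ 2)]
    · have hsub : μ 1 = -(μ 0 + μ 2) := by linarith
      rw [h, hsub]; nlinarith [sq_nonneg (μ 0 - μ 2)]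
    · have hsub : μ 2 = -(μ 0 + μ 1) := by linarith
      rw [h, hsub]; nlinarith [sq_nonneg (μ 0 - μ 1)]
  have hwneg : w ≤ 0 := by
    have : 3 * w ≤ ∑ i, μ i := by rw [Fin.sum_univ_three]; linarith [hle 0, hle 1, hle 2]
    linarith [h1 ▸ this]
  rw [h2]
  have : w ^ 2 ≤ 2 / 3 * s := by linarith
  have h3 : -Real.sqrt (2/3) * Real.sqrt s = -Real.sqrt (2/3 * s) := by
    rw [Real.sqrt_mul (by norm_num)]; ring
  rw [ge_iff_le, h3, neg_le, ← Real.sqrt_sq (neg_nonneg.2 hwneg)]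
  exact Real.sqrt_le_sqrt (by nlinarith)
end

section
/- For a trace-free symmetric endomorphism W of a 3-dimensional real inner product space and any vector ψ, one has ⟨W(ψ), ψ⟩ ≤ √(2/3)·‖W‖·‖ψ‖², where ‖W‖ is the Frobenius norm. -/
open scoped BigOperators

lemma aux_trace_eq_sum {V : Type*} [NormedAddCommGroup V] [InnerProductSpace ℝ V]
    [FiniteDimensional ℝ V] {n : ℕ} (b : OrthonormalBasis (Fin n) ℝ V)
    (T : V →ₗ[ℝ] V) (μ : Fin n → ℝ) (h : ∀ i, T (b i) = μ i • b i) :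
    LinearMap.trace ℝ V T = ∑ i, μ i := by
  rw [LinearMap.trace_eq_matrix_trace ℝ b.toBasis, Matrix.trace]
  congr 1
  ext i
  simp [Matrix.diag, LinearMap.toMatrix_apply, h i]

lemma aux_sq (a b c : ℝ) (h : a + b + c = 0) :
    a ^ 2 ≤ 2 / 3 * (a ^ 2 + b ^ 2 + c ^ 2) := by
  have ha : a = -b - c := by linarith
  rw [ha]
  nlinarith [sq_nonneg (b - c)]

lemma aux_key (μ : Fin 3 → ℝ) (h : ∑ i, μ i = 0) (i : Fin 3) :
    μ i ≤ Real.sqrt (2 / 3) * Real.sqrt (∑ j, μ j ^ 2) := by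
  rw [Fin.sum_univ_three] at h
  have h1 : (μ i) ^ 2 ≤ (2 / 3) * ∑ j, μ j ^ 2 := by
    rw [Fin.sum_univ_three]
    fin_cases i
    · exact aux_sq _ _ _ h
    · show μ 1 ^ 2 ≤ 2 / 3 * (μ 0 ^ 2 + μ 1 ^ 2 + μ 2 ^ 2)
      have := aux_sq (μ 1) (μ 0) (μ 2) (by linarith); linarith
    · show μ 2 ^ 2 ≤ 2 / 3 * (μ 0 ^ 2 + μ 1 ^ 2 + μ 2 ^ 2)
      have := aux_sq (μ 2) (μ 0) (μ 1) (by linarith); linarith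
  calc μ i ≤ |μ i| := le_abs_self _
    _ = Real.sqrt ((μ i) ^ 2) := (Real.sqrt_sq_eq_abs _).symm
    _ ≤ Real.sqrt ((2 / 3) * ∑ j, μ j ^ 2) := Real.sqrt_le_sqrt h1
    _ = Real.sqrt (2 / 3) * Real.sqrt (∑ j, μ j ^ 2) := Real.sqrt_mul (by norm_num) _

/-- For a trace-free symmetric endomorphism `W` of a 3-dimensional real inner
product space and any vector `ψ`: `⟨W ψ, ψ⟩ ≤ √(2/3)·‖W‖·‖ψ‖²`, where
`‖W‖ = √(tr(W ∘ W))` is the Frobenius norm. -/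
theorem stmt_1 {V : Type*} [NormedAddCommGroup V] [InnerProductSpace ℝ V]
    [FiniteDimensional ℝ V] (hdim : Module.finrank ℝ V = 3)
    (W : V →ₗ[ℝ] V) (hsym : W.IsSymmetric)
    (htr : LinearMap.trace ℝ V W = 0) (ψ : V) :
    inner ℝ (W ψ) ψ ≤ Real.sqrt (2 / 3) * Real.sqrt (LinearMap.trace ℝ V (W ∘ₗ W)) * ‖ψ‖ ^ 2 := by
  set b := hsym.eigenvectorBasis hdim with hb
  set μ := hsym.eigenvalues hdim with hμ
  have happ : ∀ i, W (b i) = μ i • b i := fun i => hsym.apply_eigenvectorBasis hdim i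
  have happ2 : ∀ i, (W ∘ₗ W) (b i) = (μ i) ^ 2 • b i := fun i => by
    simp [LinearMap.comp_apply, happ i, map_smul, smul_smul, sq]
  have htrμ : ∑ i, μ i = 0 := by
    rw [← aux_trace_eq_sum b W μ happ]; exact htr
  have htr2 : LinearMap.trace ℝ V (W ∘ₗ W) = ∑ i, (μ i) ^ 2 :=
    aux_trace_eq_sum b (W ∘ₗ W) _ happ2
  have hinner : (inner ℝ (W ψ) ψ : ℝ) = ∑ i, μ i * (inner ℝ (b i) ψ : ℝ) ^ 2 := by
    rw [← b.sum_inner_mul_inner (W ψ) ψ]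
    refine Finset.sum_congr rfl fun i _ => ?_
    rw [hsym ψ (b i), happ i, real_inner_smul_right, real_inner_comm ψ (b i)]
    ring
  have hnorm : ‖ψ‖ ^ 2 = ∑ i, (inner ℝ (b i) ψ : ℝ) ^ 2 := by
    have h2 := b.sum_inner_mul_inner ψ ψ
    rw [real_inner_self_eq_norm_sq] at h2
    rw [← h2]
    refine Finset.sum_congr rfl fun i _ => ?_
    rw [real_inner_comm ψ (b i)]
    ring
  rw [hinner, htr2, hnorm, Finset.mul_sum]
  exact Finset.sum_le_sum fun i _ =>
    mul_le_mul_of_nonneg_right (aux_key μ htrμ i) (sq_nonneg _)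
end
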